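/- Let H be a linear directed hypergraph (every two hyperedges share at most one vertex) such that every hyperedge has fewer head-vertices than tail-vertices, and whenever two hyperedges intersect in a single vertex v, v is a head-vertex of at least one of them. Then H admits a proper 2-coloring. -/
import Mathlib


/-- A linear directed hypergraph (any two distinct hyperedges share at most one vertex)
with Property S: every hyperedge has fewer head-vertices than tail-vertices, and
whenever two hyperedges intersect in a single vertex `v`, `v` is a head-vertex of at
least one of them. Then it admits a proper 2-coloring. Hyperedges are pairs
`(tail, head)` of disjoint finsets. -/
theorem stmt5 {V : Type*} [Fintype V] [DecidableEq V]
    (E : Finset (Finset V × Finset V))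
    (hdisj : ∀ e ∈ E, Disjoint e.1 e.2)
    (hmaj : ∀ e ∈ E, e.2.card < e.1.card)
    (hlin : ∀ e₁ ∈ E, ∀ e₂ ∈ E, e₁ ≠ e₂ →
      ((e₁.1 ∪ e₁.2) ∩ (e₂.1 ∪ e₂.2)).card ≤ 1)
    (hint : ∀ e₁ ∈ E, ∀ e₂ ∈ E, ∀ v : V,
      (e₁.1 ∪ e₁.2) ∩ (e₂.1 ∪ e₂.2) = {v} → v ∈ e₁.2 ∨ v ∈ e₂.2) :
    ∃ f : V → Bool, ∀ e ∈ E, ∃ u ∈ e.1 ∪ e.2, ∃ w ∈ e.1 ∪ e.2, f u ≠ f w := by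
  classical
  -- Each vertex lies in the tail of at most one edge.
  have huniq : ∀ e₁ ∈ E, ∀ e₂ ∈ E, ∀ v : V, v ∈ e₁.1 → v ∈ e₂.1 → e₁ = e₂ := by
    intro e₁ h₁ e₂ h₂ v hv₁ hv₂
    by_contra hne
    have hmem : v ∈ (e₁.1 ∪ e₁.2) ∩ (e₂.1 ∪ e₂.2) :=
      Finset.mem_inter.mpr ⟨Finset.mem_union_left _ hv₁, Finset.mem_union_left _ hv₂⟩
    have hcard := hlin e₁ h₁ e₂ h₂ hne
    have hsing : (e₁.1 ∪ e₁.2) ∩ (e₂.1 ∪ e₂.2) = {v} := by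
      apply Finset.eq_singleton_iff_unique_mem.mpr
      refine ⟨hmem, fun x hx => ?_⟩
      by_contra hxv
      have : 1 < ((e₁.1 ∪ e₁.2) ∩ (e₂.1 ∪ e₂.2)).card :=
        Finset.one_lt_card.mpr ⟨x, hx, v, hmem, hxv⟩
      omega
    rcases hint e₁ h₁ e₂ h₂ v hsing with h | h
    · exact (Finset.disjoint_left.mp (hdisj e₁ h₁)) hv₁ h
    · exact (Finset.disjoint_left.mp (hdisj e₂ h₂)) hv₂ h
  -- Every edge has at least two tail vertices.
  have htwo : ∀ e ∈ E, 1 < e.1.card := by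
    intro e he
    by_contra hle
    have hm := hmaj e he
    have h1 : e.1.card = 1 := by omega
    have h2 : e.2 = ∅ := Finset.card_eq_zero.mp (by omega)
    obtain ⟨v, hv⟩ := Finset.card_eq_one.mp h1
    have hsing : (e.1 ∪ e.2) ∩ (e.1 ∪ e.2) = {v} := by
      rw [h2, hv]; simp
    rcases hint e he e he v hsing with h | h <;> simp [h2] at h
  -- distinguished tail vertex coloring
  refine ⟨fun v => decide (∃ e ∈ E, ∃ h : v ∈ e.1, v = (⟨v, h⟩ : e.1.Nonempty).choose), ?_⟩
  intro e he
  have hne : e.1.Nonempty := Finset.card_pos.mp (by have := htwo e he; omega)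
  set u := hne.choose with hu
  have hu1 : u ∈ e.1 := hne.choose_spec
  obtain ⟨w, hw1, hwu⟩ := Finset.exists_mem_ne (htwo e he) u
  refine ⟨u, Finset.mem_union_left _ hu1, w, Finset.mem_union_left _ hw1, ?_⟩
  have hfu : decide (∃ e' ∈ E, ∃ h : u ∈ e'.1, u = (⟨u, h⟩ : e'.1.Nonempty).choose) = true := by
    exact decide_eq_true ⟨e, he, hu1, rfl⟩
  have hfw : decide (∃ e' ∈ E, ∃ h : w ∈ e'.1, w = (⟨w, h⟩ : e'.1.Nonempty).choose) = false := by
    apply decide_eq_false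
    rintro ⟨e', he', hw', hweq⟩
    have heq : e = e' := huniq e he e' he' w hw1 hw'
    subst heq
    have hwu' : w = u := hweq
    exact hwu hwu'
  simp only [hfu, hfw]
  decide
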